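/- Let (Ω, ℙ) be a probability space, λ > 0, and m, d natural numbers with d ≥ 2 and 2·ln d ≤ m. Let Y₁, …, Y_d : Ω → ℝ be measurable random variables such that for each n and every real c: ℙ(|Y_n| ≥ c) ≤ 2·exp(−c²/(8·m·λ²)) whenever 0 ≤ c ≤ 2·m·λ, and ℙ(|Y_n| ≥ c) ≤ 2·exp(−c/(4λ)) whenever c ≥ 2·m·λ. Then E[max_{1 ≤ n ≤ d} |Y_n|] ≤ √(8·m·ln d)·λ + √(8·π·m)·λ + 8·λ·ln d + 8·λ. -/

import Mathlib

open MeasureTheory Real Set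

private lemma integral_exp_Ioi' {k : ℝ} (hk : 0 < k) (a : ℝ) :
    ∫ t in Ioi a, Real.exp (-(k * t)) = Real.exp (-(k * a)) / k := by
  have hderiv : ∀ x ∈ Ici a, HasDerivAt (fun t => -Real.exp (-(k * t)) / k)
      (Real.exp (-(k * x))) x := by
    intro x _
    have h1 : HasDerivAt (fun t : ℝ => -(k * t)) (-k) x := by
      simpa using ((hasDerivAt_id x).const_mul k).fun_neg
    have h2 := (h1.exp.fun_neg.div_const k)
    refine h2.congr_deriv ?_
    field_simp
  have hint : IntegrableOn (fun t => Real.exp (-(k * t))) (Ioi a) := by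
    simpa [neg_mul] using exp_neg_integrableOn_Ioi a hk
  have htend : Filter.Tendsto (fun t => -Real.exp (-(k * t)) / k)
      Filter.atTop (nhds 0) := by
    have h0 : Filter.Tendsto (fun t : ℝ => k * t) Filter.atTop Filter.atTop :=
      Filter.Tendsto.const_mul_atTop hk Filter.tendsto_id
    have h3 := (Real.tendsto_exp_neg_atTop_nhds_zero.comp h0).neg.div_const k
    simpa using h3
  have h := integral_Ioi_of_hasDerivAt_of_tendsto' hderiv hint htend
  rw [h]
  ring

private lemma lintegral_exp_tail (a C : ℝ) {k : ℝ} (hC : 0 ≤ C) (hk : 0 < k) :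
    ∫⁻ t in Ioi a, ENNReal.ofReal (C * Real.exp (-(k * t)))
      = ENNReal.ofReal (C * (Real.exp (-(k * a)) / k)) := by
  have hint : IntegrableOn (fun t => C * Real.exp (-(k * t))) (Ioi a) := by
    have h := exp_neg_integrableOn_Ioi a hk
    simp_rw [neg_mul] at h
    exact h.const_mul C
  rw [← ofReal_integral_eq_lintegral_ofReal hint
    (Filter.Eventually.of_forall fun x => by positivity),
    MeasureTheory.integral_const_mul, integral_exp_Ioi' hk]

set_option maxHeartbeats 2000000 in
/-- Expectation bound for the maximum of `d` random variables each satisfying the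
Gaussian-regime and exponential-regime tail bounds of sums of `m` i.i.d. Laplace(`lam`)
variables: `E[max_n |Y n|] ≤ √(8*m*ln d)*lam + √(8*π*m)*lam + 8*lam*ln d + 8*lam`. -/
theorem expected_max_abs_bound {Ω : Type*} [MeasurableSpace Ω]
    (P : Measure Ω) [IsProbabilityMeasure P]
    (lam : ℝ) (hlam : 0 < lam) (m d : ℕ) (hd : 2 ≤ d) (hmd : 2 * Real.log d ≤ m)
    (Y : Fin d → Ω → ℝ) (hmeas : ∀ n, Measurable (Y n))
    (htail₁ : ∀ n, ∀ c : ℝ, 0 ≤ c → c ≤ 2 * m * lam →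
      P {ω | c ≤ |Y n ω|} ≤ ENNReal.ofReal (2 * Real.exp (-c ^ 2 / (8 * m * lam ^ 2))))
    (htail₂ : ∀ n, ∀ c : ℝ, 2 * m * lam ≤ c →
      P {ω | c ≤ |Y n ω|} ≤ ENNReal.ofReal (2 * Real.exp (-c / (4 * lam)))) :
    ∫⁻ ω, ENNReal.ofReal
        (Finset.univ.sup' ⟨(⟨0, by omega⟩ : Fin d), Finset.mem_univ _⟩
          fun n => |Y n ω|) ∂P
      ≤ ENNReal.ofReal (Real.sqrt (8 * m * Real.log d) * lam
          + Real.sqrt (8 * Real.pi * m) * lam + 8 * lam * Real.log d + 8 * lam) := by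
  have hd1 : (1:ℝ) < d := by exact_mod_cast (by omega : 1 < d)
  have hd0 : (0:ℝ) < d := by linarith
  set L := Real.log d with hLdef
  have hL2 : Real.log 2 ≤ L := Real.log_le_log (by norm_num) (by exact_mod_cast hd)
  have hlog2 : (0.6931471803 : ℝ) < Real.log 2 := Real.log_two_gt_d9
  have hLpos : 0 < L := by linarith
  have hm1 : (1:ℝ) ≤ m := by linarith
  have hm0 : (0:ℝ) < m := by linarith
  set σ2 : ℝ := 8 * m * lam ^ 2 with hσ2def
  have hσ2 : 0 < σ2 := by positivity
  set a : ℝ := Real.sqrt (8 * m * L) * lam with hadef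
  set b : ℝ := 2 * m * lam with hbdef
  have ha : 0 < a := mul_pos (Real.sqrt_pos.2 (by positivity)) hlam
  have ha2 : a ^ 2 = σ2 * L := by
    rw [hadef, mul_pow, Real.sq_sqrt (by positivity)]
    ring
  have hab : a ≤ b := by
    have h1 : Real.sqrt (8 * m * L) ≤ 2 * m := by
      have h2 := Real.sqrt_le_sqrt (show 8 * (m:ℝ) * L ≤ (2 * m) ^ 2 by nlinarith)
      rwa [Real.sqrt_sq (by positivity)] at h2
    exact mul_le_mul_of_nonneg_right h1 hlam.le
  set i0 : Fin d := ⟨0, by omega⟩ with hi0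
  have H : (Finset.univ : Finset (Fin d)).Nonempty := ⟨i0, Finset.mem_univ _⟩
  set M : Ω → ℝ := fun ω => Finset.univ.sup' H fun n => |Y n ω| with hM
  have Mnn : ∀ ω, 0 ≤ M ω := by
    intro ω
    rw [hM]
    exact le_trans (abs_nonneg (Y i0 ω))
      (Finset.le_sup' (fun n => |Y n ω|) (Finset.mem_univ i0))
  have Mmeas : Measurable M := by
    have he : M = Finset.univ.sup' H (fun n ω => |Y n ω|) := by
      funext ω; rw [hM, Finset.sup'_apply]
    rw [he]
    exact Finset.measurable_sup' _ fun n _ => (hmeas n).abs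
  have key : ∫⁻ ω, ENNReal.ofReal (M ω) ∂P
      ≤ ENNReal.ofReal (Real.sqrt (8 * m * L) * lam
          + Real.sqrt (8 * Real.pi * m) * lam + 8 * lam * L + 8 * lam) := by
    rw [lintegral_eq_lintegral_meas_le P (Filter.Eventually.of_forall Mnn) Mmeas.aemeasurable]
    have tailM : ∀ (t g : ℝ), 0 ≤ g → (∀ n, P {ω | t ≤ |Y n ω|} ≤ ENNReal.ofReal g) →
        P {ω | t ≤ M ω} ≤ ENNReal.ofReal ((d:ℝ) * g) := by
      intro t g hg h
      have hset : {ω | t ≤ M ω} = ⋃ n, {ω | t ≤ |Y n ω|} := by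
        ext ω
        simp [hM, Finset.le_sup'_iff]
      rw [hset]
      calc P (⋃ n, {ω | t ≤ |Y n ω|}) ≤ ∑' n, P {ω | t ≤ |Y n ω|} := measure_iUnion_le _
        _ ≤ ∑' _ : Fin d, ENNReal.ofReal g := ENNReal.tsum_le_tsum fun n => h n
        _ = ENNReal.ofReal ((d:ℝ) * g) := by
            rw [tsum_fintype, Finset.sum_const, Finset.card_univ, Fintype.card_fin,
              ENNReal.ofReal_mul (by positivity), ENNReal.ofReal_natCast]
            simp [nsmul_eq_mul]
    have hsplit1 : Ioi (0:ℝ) = Ioc 0 a ∪ Ioi a := (Ioc_union_Ioi_eq_Ioi ha.le).symm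
    have hsplit2 : Ioi a = Ioc a b ∪ Ioi b := (Ioc_union_Ioi_eq_Ioi hab).symm
    rw [hsplit1, lintegral_union measurableSet_Ioi Ioc_disjoint_Ioi_same,
      hsplit2, lintegral_union measurableSet_Ioi Ioc_disjoint_Ioi_same]
    -- first piece
    have hI1 : ∫⁻ t in Ioc (0:ℝ) a, P {ω | t ≤ M ω} ≤ ENNReal.ofReal a := by
      calc ∫⁻ t in Ioc (0:ℝ) a, P {ω | t ≤ M ω} ≤ ∫⁻ _ in Ioc (0:ℝ) a, 1 :=
            lintegral_mono fun t => prob_le_one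
        _ = ENNReal.ofReal a := by
            rw [setLIntegral_const, one_mul, Real.volume_Ioc, sub_zero]
    -- second piece
    set k₁ : ℝ := 2 * a / σ2 with hk₁def
    have hk₁ : 0 < k₁ := by positivity
    have hI2 : ∫⁻ t in Ioc a b, P {ω | t ≤ M ω}
        ≤ ENNReal.ofReal (Real.sqrt (8 * Real.pi * m) * lam) := by
      have hptw : ∀ t ∈ Ioc a b, P {ω | t ≤ M ω}
          ≤ ENNReal.ofReal (2 * (d:ℝ) ^ 2 * Real.exp (-(k₁ * t))) := by
        intro t ht
        have ht0 : (0:ℝ) ≤ t := le_trans ha.le ht.1.le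
        refine le_trans (tailM t _ (by positivity)
          (fun n => htail₁ n t ht0 ht.2)) (ENNReal.ofReal_le_ofReal ?_)
        have hexp1 : Real.exp (-t ^ 2 / σ2) ≤ (d:ℝ) * Real.exp (-(k₁ * t)) := by
          rw [← Real.exp_log hd0, ← Real.exp_add]
          apply Real.exp_le_exp.2
          have e1 : (-t ^ 2) / σ2 ≤ (a ^ 2 - 2 * a * t) / σ2 :=
            (div_le_div_iff_of_pos_right hσ2).2 (by nlinarith [sq_nonneg (t - a)])
          have e2 : Real.log d + -(k₁ * t) = (a ^ 2 - 2 * a * t) / σ2 := by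
            rw [← hLdef, hk₁def]
            have : L = a ^ 2 / σ2 := by rw [ha2]; field_simp
            rw [this]; ring
          rw [e2]
          calc -t ^ 2 / σ2 = (-t ^ 2) / σ2 := by ring
            _ ≤ (a ^ 2 - 2 * a * t) / σ2 := e1
        nlinarith [mul_le_mul_of_nonneg_left hexp1
          (show (0:ℝ) ≤ 2 * d by positivity)]
      calc ∫⁻ t in Ioc a b, P {ω | t ≤ M ω}
          ≤ ∫⁻ t in Ioc a b, ENNReal.ofReal (2 * (d:ℝ) ^ 2 * Real.exp (-(k₁ * t))) :=
            setLIntegral_mono (by fun_prop) hptw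
        _ ≤ ∫⁻ t in Ioi a, ENNReal.ofReal (2 * (d:ℝ) ^ 2 * Real.exp (-(k₁ * t))) :=
            lintegral_mono_set Ioc_subset_Ioi_self
        _ = ENNReal.ofReal (2 * (d:ℝ) ^ 2 * (Real.exp (-(k₁ * a)) / k₁)) :=
            lintegral_exp_tail a _ (by positivity) hk₁
        _ ≤ ENNReal.ofReal (Real.sqrt (8 * Real.pi * m) * lam) := by
            apply ENNReal.ofReal_le_ofReal
            have hka : k₁ * a = 2 * L := by
              rw [hk₁def]
              have : 2 * a / σ2 * a = 2 * a ^ 2 / σ2 := by ring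
              rw [this, ha2]
              field_simp
            have hexp2 : Real.exp (-(k₁ * a)) = ((d:ℝ) ^ 2)⁻¹ := by
              rw [hka, Real.exp_neg]
              congr 1
              rw [two_mul, Real.exp_add, hLdef, Real.exp_log hd0]
              ring
            have hLHS : 2 * (d:ℝ) ^ 2 * (Real.exp (-(k₁ * a)) / k₁) = σ2 / a := by
              rw [hexp2, hk₁def]
              field_simp
            rw [hLHS, div_le_iff₀ ha]
            have hsq : Real.sqrt (8 * Real.pi * m) * Real.sqrt (8 * m * L)
                = 8 * m * Real.sqrt (Real.pi * L) := by
              rw [← Real.sqrt_mul (by positivity),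
                show 8 * Real.pi * (m:ℝ) * (8 * m * L) = (8 * m) ^ 2 * (Real.pi * L) by ring,
                Real.sqrt_mul (by positivity), Real.sqrt_sq (by positivity)]
            have h1le : (1:ℝ) ≤ Real.sqrt (Real.pi * L) := by
              rw [show (1:ℝ) = Real.sqrt 1 by simp]
              exact Real.sqrt_le_sqrt (by nlinarith [Real.pi_gt_three])
            have h2 := mul_le_mul_of_nonneg_left h1le
              (show (0:ℝ) ≤ 8 * m * lam ^ 2 by positivity)
            rw [hadef, hσ2def]
            nlinarith [hsq, h2, sq_nonneg lam]
    -- third piece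
    set k₂ : ℝ := (4 * lam)⁻¹ with hk₂def
    have hk₂ : 0 < k₂ := by positivity
    have hI3 : ∫⁻ t in Ioi b, P {ω | t ≤ M ω} ≤ ENNReal.ofReal (8 * lam) := by
      have hptw : ∀ t ∈ Ioi b, P {ω | t ≤ M ω}
          ≤ ENNReal.ofReal (2 * (d:ℝ) * Real.exp (-(k₂ * t))) := by
        intro t ht
        refine le_trans (tailM t _ (by positivity)
          (fun n => htail₂ n t (le_of_lt ht))) (ENNReal.ofReal_le_ofReal (le_of_eq ?_))
        rw [show -(k₂ * t) = -t / (4 * lam) by rw [hk₂def]; field_simp]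
        ring
      calc ∫⁻ t in Ioi b, P {ω | t ≤ M ω}
          ≤ ∫⁻ t in Ioi b, ENNReal.ofReal (2 * (d:ℝ) * Real.exp (-(k₂ * t))) :=
            setLIntegral_mono (by fun_prop) hptw
        _ = ENNReal.ofReal (2 * (d:ℝ) * (Real.exp (-(k₂ * b)) / k₂)) :=
            lintegral_exp_tail b _ (by positivity) hk₂
        _ ≤ ENNReal.ofReal (8 * lam) := by
            apply ENNReal.ofReal_le_ofReal
            have hkb : k₂ * b = m / 2 := by
              rw [hk₂def, hbdef]
              field_simp
              ring
            have hexp3 : Real.exp (-((m:ℝ) / 2)) ≤ ((d:ℝ))⁻¹ := by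
              rw [show ((d:ℝ))⁻¹ = Real.exp (-L) by
                rw [Real.exp_neg, hLdef, Real.exp_log hd0]]
              exact Real.exp_le_exp.2 (by linarith)
            have h5 : (d:ℝ) * Real.exp (-((m:ℝ) / 2)) ≤ 1 := by
              calc (d:ℝ) * Real.exp (-((m:ℝ) / 2)) ≤ (d:ℝ) * ((d:ℝ))⁻¹ :=
                    mul_le_mul_of_nonneg_left hexp3 hd0.le
                _ = 1 := mul_inv_cancel₀ hd0.ne'
            rw [hkb, hk₂def]
            have : 2 * (d:ℝ) * (Real.exp (-((m:ℝ) / 2)) / (4 * lam)⁻¹)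
                = 8 * lam * ((d:ℝ) * Real.exp (-((m:ℝ) / 2))) := by
              field_simp
              ring
            rw [this]
            nlinarith [h5]
    calc (∫⁻ t in Ioc (0:ℝ) a, P {ω | t ≤ M ω})
          + ((∫⁻ t in Ioc a b, P {ω | t ≤ M ω}) + ∫⁻ t in Ioi b, P {ω | t ≤ M ω})
        ≤ ENNReal.ofReal a + (ENNReal.ofReal (Real.sqrt (8 * Real.pi * m) * lam)
            + ENNReal.ofReal (8 * lam)) := add_le_add hI1 (add_le_add hI2 hI3)
      _ = ENNReal.ofReal (a + (Real.sqrt (8 * Real.pi * m) * lam + 8 * lam)) := by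
          rw [← ENNReal.ofReal_add (by positivity) (by positivity),
            ← ENNReal.ofReal_add ha.le (by positivity)]
      _ ≤ ENNReal.ofReal (Real.sqrt (8 * m * L) * lam
            + Real.sqrt (8 * Real.pi * m) * lam + 8 * lam * L + 8 * lam) := by
          apply ENNReal.ofReal_le_ofReal
          rw [hadef]
          nlinarith [hLpos, hlam]
  exact le_trans (le_of_eq rfl) key
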